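/- For a point x ∈ ∂Ω the following are equivalent: (1) x is accessible; (2) there exists a chain in Ω with impression {x}; (3) there exists a prime chain in Ω with impression {x}. -/

import Mathlib

open Metric Set Filter Topology

/-- The distance between two subsets of a metric space
(infimum of pairwise distances, with `sInf ∅ = 0`). -/
noncomputable def setDist {X : Type*} [MetricSpace X] (A B : Set X) : ℝ :=
  sInf {d : ℝ | ∃ a ∈ A, ∃ b ∈ B, d = dist a b}

/-- `Ω` is a bounded domain: bounded, nonempty, open, connected, and not all of `X`. -/
def BoundedDomain {X : Type*} [MetricSpace X] (Ω : Set X) : Prop :=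
  IsOpen Ω ∧ IsConnected Ω ∧ Bornology.IsBounded Ω ∧ Ω ≠ Set.univ

/-- An acceptable set: a bounded connected set `E ⊊ Ω` whose closure meets `∂Ω`. -/
def Acceptable {X : Type*} [MetricSpace X] (Ω E : Set X) : Prop :=
  Bornology.IsBounded E ∧ IsConnected E ∧ E ⊆ Ω ∧ E ≠ Ω ∧
    (closure E ∩ frontier Ω).Nonempty

/-- A chain in `Ω`: a nested sequence of acceptable sets whose consecutive
relative boundaries are at positive distance and whose impression
`⋂ k, closure (E k)` lies in `∂Ω`. -/
def IsChainIn {X : Type*} [MetricSpace X] (Ω : Set X) (E : ℕ → Set X) : Prop :=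
  (∀ k, Acceptable Ω (E k)) ∧
  (∀ k, E (k + 1) ⊆ E k) ∧
  (∀ k, 0 < setDist (Ω ∩ frontier (E (k + 1))) (Ω ∩ frontier (E k))) ∧
  (⋂ k, closure (E k)) ⊆ frontier Ω

/-- A chain `E` divides a chain `F` if each `F k` contains some `E l`. -/
def Divides {X : Type*} (E F : ℕ → Set X) : Prop := ∀ k, ∃ l, E l ⊆ F k

/-- Two chains are equivalent if each divides the other. -/
def EquivChains {X : Type*} (E F : ℕ → Set X) : Prop := Divides E F ∧ Divides F E

/-- A prime chain: a chain such that every chain dividing it is equivalent to it. -/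
def IsPrimeChain {X : Type*} [MetricSpace X] (Ω : Set X) (E : ℕ → Set X) : Prop :=
  IsChainIn Ω E ∧ ∀ F : ℕ → Set X, IsChainIn Ω F → Divides F E → EquivChains F E

/-- A boundary point `x` is accessible if some curve in `Ω` ends at `x`. -/
def Accessible {X : Type*} [MetricSpace X] (Ω : Set X) (x : X) : Prop :=
  ∃ γ : ℝ → X, ContinuousOn γ (Set.Icc 0 1) ∧ γ 1 = x ∧ γ '' Set.Ico 0 1 ⊆ Ω

/-- `Ω` is finitely connected at `x₀` if each ball around `x₀` contains an open
neighborhood `G` of `x₀` such that `G ∩ Ω` has finitely many components. -/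
def FinitelyConnectedAt {X : Type*} [MetricSpace X] (Ω : Set X) (x₀ : X) : Prop :=
  ∀ r : ℝ, 0 < r → ∃ G : Set X, IsOpen G ∧ x₀ ∈ G ∧ G ⊆ Metric.ball x₀ r ∧
    {C : Set X | ∃ y ∈ G ∩ Ω, C = connectedComponentIn (G ∩ Ω) y}.Finite


section PrimeEndAux
set_option linter.unusedSectionVars false

variable {X : Type*} [MetricSpace X] [LocallyConnectedSpace X]

/-- A chain of small connected open sets joining `a` to `b` inside `W`. -/
def ChainP (W : Set X) (ε : ℝ) (a b : X) (n : ℕ) (p : ℕ → X) (C : ℕ → Set X) : Prop :=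
  p 0 = a ∧ p n = b ∧ ∀ i < n, IsOpen (C i) ∧ IsPreconnected (C i) ∧ closure (C i) ⊆ W ∧
    C i ⊆ ball (p i) ε ∧ p i ∈ C i ∧ p (i + 1) ∈ C i

lemma exists_small_conn {W : Set X} (hW : IsOpen W) {y : X} (hy : y ∈ W) {ε : ℝ} (hε : 0 < ε) :
    ∃ C : Set X, IsOpen C ∧ IsPreconnected C ∧ y ∈ C ∧ closure C ⊆ W ∧ C ⊆ ball y ε := by
  obtain ⟨r, hr, hrW⟩ := nhds_basis_closedBall.mem_iff.1 (hW.mem_nhds hy)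
  have hmin : 0 < min r ε := lt_min hr hε
  obtain ⟨V, ⟨hVopen, hyV, hVconn⟩, hVsub⟩ :=
    (LocallyConnectedSpace.open_connected_basis y).mem_iff.1 (ball_mem_nhds y hmin)
  refine ⟨V, hVopen, hVconn.isPreconnected, hyV, ?_, ?_⟩
  · calc closure V ⊆ closure (ball y (min r ε)) := closure_mono hVsub
      _ ⊆ closedBall y (min r ε) := closure_ball_subset_closedBall
      _ ⊆ closedBall y r := closedBall_subset_closedBall (min_le_left _ _)
      _ ⊆ W := hrW
  · exact hVsub.trans (ball_subset_ball (min_le_right _ _))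

lemma exists_chain {W : Set X} (hW : IsOpen W) (hWc : IsPreconnected W) {a b : X}
    (ha : a ∈ W) (hb : b ∈ W) {ε : ℝ} (hε : 0 < ε) :
    ∃ n p C, ChainP W ε a b n p C := by
  set S : Set X := {y | y ∈ W ∧ ∃ n p C, ChainP W ε a y n p C} with hS
  have haS : a ∈ S := by
    refine ⟨ha, 0, fun _ => a, fun _ => ∅, rfl, rfl, fun i hi => absurd hi (Nat.not_lt_zero i)⟩
  -- extension: if z ∈ S and C is a small connected open set around some y with z ∈ C, then C ⊆ S
  have hext : ∀ y ∈ W, ∀ C : Set X, IsOpen C → IsPreconnected C → closure C ⊆ W →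
      C ⊆ ball y (ε / 2) → y ∈ C → ∀ z ∈ C, z ∈ S → C ⊆ S := by
    intro y hyW C hCo hCc hCcl hCb hyC z hzC hzS w hwC
    obtain ⟨hzW, n, p, D, hp0, hpn, hch⟩ := hzS
    refine ⟨hCcl (subset_closure hwC), n + 1,
      fun i => if i ≤ n then p i else w, fun i => if i < n then D i else C, ?_, ?_, ?_⟩
    · simp [hp0]
    · simp
    · intro i hi
      rcases lt_or_ge i n with h | h
      · have h1 : i ≤ n := h.le
        have h2 : i + 1 ≤ n := h
        simpa [h, h1, h2] using hch i h
      · have hin : i = n := le_antisymm (Nat.lt_succ_iff.1 hi) h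
        subst hin
        have hC2 : C ⊆ ball (p i) ε := by
          intro u hu
          have h1 : dist u y < ε / 2 := mem_ball.1 (hCb hu)
          have h2 : dist (p i) y < ε / 2 := by
            rw [hpn]; exact mem_ball.1 (hCb hzC)
          have := dist_triangle u y (p i)
          rw [mem_ball]
          rw [dist_comm] at h2
          calc dist u (p i) ≤ dist u y + dist y (p i) := dist_triangle _ _ _
            _ < ε / 2 + ε / 2 := by rw [dist_comm y (p i)] at h2 ⊢; exact add_lt_add h1 h2
            _ = ε := add_halves ε
        have hzpi : p i ∈ C := by rw [hpn]; exact hzC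
        simp only [le_refl, if_pos, lt_irrefl, if_neg (lt_irrefl i)]
        refine ⟨hCo, hCc, hCcl, hC2, hzpi, ?_⟩
        simp [Nat.not_succ_le_self i, hwC]
  -- every point of W in the closure of S is in S
  have hclos : ∀ y ∈ W, y ∈ closure S → y ∈ S := by
    intro y hyW hyc
    obtain ⟨C, hCo, hCc, hyC, hCcl, hCb⟩ := exists_small_conn hW hyW (half_pos hε)
    obtain ⟨z, hzC, hzS⟩ := mem_closure_iff.1 hyc C hCo hyC
    exact hext y hyW C hCo hCc hCcl hCb hyC z hzC hzS hyC
  -- S is open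
  have hSopen : IsOpen S := by
    rw [isOpen_iff_mem_nhds]
    intro y hyS
    obtain ⟨C, hCo, hCc, hyC, hCcl, hCb⟩ := exists_small_conn hW hyS.1 (half_pos hε)
    exact Filter.mem_of_superset (hCo.mem_nhds hyC)
      (hext y hyS.1 C hCo hCc hCcl hCb hyC y hyC hyS)
  -- conclude by connectedness
  have hbS : b ∈ S := by
    refine hclos b hb ?_
    by_contra hbc
    have hcover : W ⊆ S ∪ (closure S)ᶜ := by
      intro y hyW
      by_cases h : y ∈ closure S
      · exact Or.inl (hclos y hyW h)
      · exact Or.inr h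
    have h1 : (W ∩ S).Nonempty := ⟨a, ha, haS⟩
    have h2 : (W ∩ (closure S)ᶜ).Nonempty := ⟨b, hb, hbc⟩
    obtain ⟨y, _, hyS, hyc⟩ := hWc S (closure S)ᶜ hSopen isClosed_closure.isOpen_compl
      hcover h1 h2
    exact hyc (subset_closure hyS)
  exact hbS.2

lemma chain_pad {W : Set X} (hW : IsOpen W) {a b : X} {ε : ℝ} (hε : 0 < ε) {n : ℕ}
    {p : ℕ → X} {C : ℕ → Set X} (h : ChainP W ε a b n p C) (hb : b ∈ W) {m : ℕ} (hnm : n ≤ m) :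
    ∃ p' C', ChainP W ε a b m p' C' := by
  obtain ⟨hp0, hpn, hch⟩ := h
  obtain ⟨D, hDo, hDc, hbD, hDcl, hDb⟩ := exists_small_conn hW hb hε
  refine ⟨fun i => if i ≤ n then p i else b, fun i => if i < n then C i else D, ?_, ?_, ?_⟩
  · simp [hp0]
  · rcases eq_or_lt_of_le hnm with h | h
    · simp [← h, hpn]
    · simp [Nat.not_le.2 h]
  · intro i hi
    rcases lt_or_ge i n with h | h
    · have h1 : i ≤ n := h.le
      have h2 : i + 1 ≤ n := h
      simpa [h, h1, h2] using hch i h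
    · have hpi : (if i ≤ n then p i else b) = b := by
        rcases eq_or_lt_of_le h with h' | h'
        · simp [← h', hpn]
        · simp [Nat.not_le.2 h']
      have hpi1 : (if i + 1 ≤ n then p (i + 1) else b) = b := by
        simp [Nat.not_le.2 (Nat.lt_succ_of_le h)]
      simp only [Nat.not_lt.2 h, if_neg (Nat.not_lt.2 h), hpi, hpi1]
      exact ⟨hDo, hDc, hDcl, hDb, hbD, hbD⟩

lemma chain_step {U : Set X} {a b : X} {ε ε' : ℝ} (hε' : 0 < ε') {N : ℕ} (hN : 0 < N)
    {p : ℕ → X} {C : ℕ → Set X} (h : ChainP U ε a b N p C) :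
    ∃ M N' p' C', 0 < M ∧ N' = N * M ∧ ChainP U ε' a b N' p' C' ∧
      ∀ k < N', closure (C' k) ⊆ C (k / M) := by
  obtain ⟨hp0, hpN, hch⟩ := h
  -- for each segment, a refined chain inside C i
  have hseg : ∀ i, ∃ (ni : ℕ) (q : ℕ → X) (D : ℕ → Set X),
      i < N → ChainP (C i) ε' (p i) (p (i + 1)) ni q D := by
    intro i
    by_cases hi : i < N
    · obtain ⟨hCo, hCc, _, _, hpi, hpi1⟩ := hch i hi
      obtain ⟨ni, q, D, hq⟩ := exists_chain hCo hCc hpi hpi1 hε'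
      exact ⟨ni, q, D, fun _ => hq⟩
    · exact ⟨0, fun _ => a, fun _ => ∅, fun h => absurd h hi⟩
  choose ni q0 D0 hq0 using hseg
  set M : ℕ := (Finset.range N).sup ni + 1 with hM
  have hM0 : 0 < M := Nat.succ_pos _
  have hniM : ∀ i < N, ni i ≤ M := by
    intro i hi
    exact le_trans (Finset.le_sup (Finset.mem_range.2 hi)) (Nat.le_succ _)
  -- pad all segments to length M
  have hseg' : ∀ i, ∃ (q : ℕ → X) (D : ℕ → Set X),
      i < N → ChainP (C i) ε' (p i) (p (i + 1)) M q D := by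
    intro i
    by_cases hi : i < N
    · obtain ⟨hCo, _, _, _, _, hpi1⟩ := hch i hi
      obtain ⟨q, D, hq⟩ := chain_pad hCo hε' (hq0 i hi) hpi1 (hniM i hi)
      exact ⟨q, D, fun _ => hq⟩
    · exact ⟨fun _ => a, fun _ => ∅, fun h => absurd h hi⟩
  choose q D hq using hseg'
  classical
  set q' : ℕ → ℕ → X := fun i => if i < N then q i else fun _ => b with hq'def
  have hq'val : ∀ i, i < N → ∀ j, q' i j = q i j := by
    intro i hi j; simp only [hq'def, if_pos hi]
  have hq'N : ∀ j, q' N j = b := by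
    intro j; simp only [hq'def, if_neg (lt_irrefl N)]
  have hwrap : ∀ i, i < N → q' (i + 1) 0 = q' i M := by
    intro i hi
    rw [hq'val i hi]
    by_cases hi1 : i + 1 < N
    · rw [hq'val (i+1) hi1, (hq (i + 1) hi1).1, (hq i hi).2.1]
    · have hiN : i + 1 = N := le_antisymm hi (Nat.not_lt.1 hi1)
      rw [hiN, hq'N, (hq i hi).2.1, hiN, hpN]
  have hNMM : N * M / M = N := by rw [mul_comm]; exact Nat.mul_div_cancel_left _ hM0
  refine ⟨M, N * M, fun k => q' (k / M) (k % M), fun k => D (k / M) (k % M), hM0, rfl, ?_, ?_⟩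
  · refine ⟨?_, ?_, ?_⟩
    · show q' (0 / M) (0 % M) = a
      rw [Nat.zero_div, Nat.zero_mod, hq'val 0 hN, (hq 0 hN).1, hp0]
    · show q' (N * M / M) (N * M % M) = b
      rw [hNMM, Nat.mul_mod_left, hq'N]
    · intro k hk
      dsimp only
      have hkM : k / M < N := Nat.div_lt_of_lt_mul (by rwa [mul_comm] at hk)
      have hkm : k % M < M := Nat.mod_lt _ hM0
      set i := k / M with hi
      set j := k % M with hj
      obtain ⟨hq01, hq02, hq03⟩ := hq i hkM
      have hCU : closure (C i) ⊆ U := (hch i hkM).2.2.1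
      have hqk : q' i j = q i j := hq'val i hkM j
      have hk1 : q' ((k + 1) / M) ((k + 1) % M) = q i (j + 1) := by
        have hkeq : k = M * i + j := (Nat.div_add_mod k M).symm
        by_cases hj1 : j + 1 < M
        · have e1 : (k + 1) / M = i := by
            rw [hkeq, show M * i + j + 1 = M * i + (j + 1) by ring,
              Nat.mul_add_div hM0, Nat.div_eq_of_lt hj1, add_zero]
          have e2 : (k + 1) % M = j + 1 := by
            rw [hkeq, show M * i + j + 1 = M * i + (j + 1) by ring,
              Nat.mul_add_mod, Nat.mod_eq_of_lt hj1]
          rw [e1, e2, hq'val i hkM]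
        · have hj1' : j + 1 = M := le_antisymm hkm (Nat.not_lt.1 hj1)
          have e0 : k + 1 = M * (i + 1) := by
            rw [hkeq, show M * i + j + 1 = M * i + M by omega]; ring
          have e1 : (k + 1) / M = i + 1 := by
            rw [e0, Nat.mul_div_cancel_left _ hM0]
          have e2 : (k + 1) % M = 0 := by rw [e0, Nat.mul_mod_right]
          rw [e1, e2, hwrap i hkM, hq'val i hkM, hj1']
      rw [hqk, hk1]
      obtain ⟨hDo, hDc, hDcl, hDb, hqj, hqj1⟩ := hq03 j hkm
      exact ⟨hDo, hDc, hDcl.trans (subset_closure.trans hCU), hDb, hqj, hqj1⟩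
  · intro k hk
    have hkM : k / M < N := Nat.div_lt_of_lt_mul (by rwa [mul_comm] at hk)
    have hkm : k % M < M := Nat.mod_lt _ hM0
    exact ((hq (k / M) hkM).2.2 (k % M) hkm).2.2.1
lemma joinedIn_of_isOpen_isPreconnected [CompleteSpace X] {U : Set X} (hU : IsOpen U)
    (hUc : IsPreconnected U) {a b : X} (ha : a ∈ U) (hb : b ∈ U) : JoinedIn U a b := by
  classical
  have : Nonempty X := ⟨a⟩
  -- initial chain at scale (1/2)^0 = 1
  obtain ⟨n0, p0, C0, h0⟩ := exists_chain hU hUc ha hb one_pos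
  obtain ⟨p0', C0', h0'⟩ := chain_pad hU one_pos h0 hb (le_max_left n0 1)
  -- the recursive refinement
  have hstep : ∀ (n : ℕ) (s : ℕ × (ℕ → X) × (ℕ → Set X)),
      (0 < s.1 ∧ ChainP U ((1/2 : ℝ) ^ n) a b s.1 s.2.1 s.2.2) →
      ∃ r : (ℕ × (ℕ → X) × (ℕ → Set X)) × ℕ,
        (0 < r.1.1 ∧ ChainP U ((1/2 : ℝ) ^ (n+1)) a b r.1.1 r.1.2.1 r.1.2.2) ∧ 0 < r.2 ∧
        r.1.1 = s.1 * r.2 ∧ ∀ k < r.1.1, closure (r.1.2.2 k) ⊆ s.2.2 (k / r.2) := by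
    rintro n ⟨N, p, C⟩ ⟨hN, hch⟩
    obtain ⟨M, N', p', C', hM0, hN', hch', hlink⟩ :=
      chain_step (pow_pos (by norm_num : (0:ℝ) < 1/2) (n+1)) hN hch
    exact ⟨⟨⟨N', p', C'⟩, M⟩, ⟨hN' ▸ Nat.mul_pos hN hM0, hch'⟩, hM0, hN', by simpa using hlink⟩
  set Inv : ℕ → (ℕ × (ℕ → X) × (ℕ → Set X)) → Prop := fun n s =>
    0 < s.1 ∧ ChainP U ((1/2 : ℝ) ^ n) a b s.1 s.2.1 s.2.2 with hInvdef
  set F : ℕ → ℕ × (ℕ → X) × (ℕ → Set X) := fun n =>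
    Nat.rec (⟨max n0 1, p0', C0'⟩ : ℕ × (ℕ → X) × (ℕ → Set X))
      (fun n s => if h : Inv n s then (Classical.choose (hstep n s h)).1 else s) n with hFdef
  have hF0 : Inv 0 (F 0) := by
    refine ⟨lt_of_lt_of_le one_pos (le_max_right n0 1), ?_⟩
    exact h0'
  have hFsucc : ∀ n, F (n + 1) =
      if h : Inv n (F n) then (Classical.choose (hstep n (F n) h)).1 else F n := fun n => rfl
  have hInvF : ∀ n, Inv n (F n) := by
    intro n
    induction n with
    | zero => exact hF0
    | succ n ih =>
      rw [hFsucc n, dif_pos ih]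
      exact (Classical.choose_spec (hstep n (F n) ih)).1
  have hlinkF : ∀ n, ∃ M, 0 < M ∧ (F (n+1)).1 = (F n).1 * M ∧
      ∀ k < (F (n+1)).1, closure ((F (n+1)).2.2 k) ⊆ (F n).2.2 (k / M) := by
    intro n
    have h := hInvF n
    have spec := Classical.choose_spec (hstep n (F n) h)
    rw [hFsucc n, dif_pos h]
    exact ⟨(Classical.choose (hstep n (F n) h)).2, spec.2.1, spec.2.2.1, spec.2.2.2⟩
  -- notation
  set N : ℕ → ℕ := fun n => (F n).1 with hNdef
  set p : ℕ → ℕ → X := fun n => (F n).2.1 with hpdef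
  set C : ℕ → ℕ → Set X := fun n => (F n).2.2 with hCdef
  choose M hM0 hNM hlink using hlinkF
  have hNM' : ∀ n, N (n+1) = N n * M n := hNM
  have hlink' : ∀ n k, k < N (n+1) → closure (C (n+1) k) ⊆ C n (k / M n) := hlink
  have hN : ∀ n, 0 < N n := fun n => (hInvF n).1
  have hp0 : ∀ n, p n 0 = a := fun n => (hInvF n).2.1
  have hpN : ∀ n, p n (N n) = b := fun n => (hInvF n).2.2.1
  have hch : ∀ n, ∀ i < N n, IsOpen (C n i) ∧ IsPreconnected (C n i) ∧ closure (C n i) ⊆ U ∧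
      C n i ⊆ ball (p n i) ((1/2 : ℝ) ^ n) ∧ p n i ∈ C n i ∧ p n (i + 1) ∈ C n i :=
    fun n => (hInvF n).2.2.2
  -- index function
  set idx : ℕ → ℝ → ℕ := fun n t => ⌊t * N n⌋₊ with hidxdef
  have hidx_lt : ∀ (n : ℕ) (t : ℝ), 0 ≤ t → t < 1 → idx n t < N n := by
    intro n t ht0 ht1
    have hNpos : (0:ℝ) < N n := by exact_mod_cast hN n
    have h : t * N n < N n := by nlinarith
    exact (Nat.floor_lt (mul_nonneg ht0 (Nat.cast_nonneg _))).2 h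
  have hidx_le : ∀ (n : ℕ) (t : ℝ), t ≤ 1 → idx n t ≤ N n := by
    intro n t ht1
    have : t * N n ≤ N n := by
      rcases le_total 0 t with h | h
      · calc t * N n ≤ 1 * N n := mul_le_mul_of_nonneg_right ht1 (Nat.cast_nonneg _)
        _ = N n := one_mul _
      · calc t * N n ≤ 0 := mul_nonpos_of_nonpos_of_nonneg h (Nat.cast_nonneg _)
        _ ≤ N n := Nat.cast_nonneg _
    calc idx n t ≤ ⌊(N n : ℝ)⌋₊ := Nat.floor_mono this
      _ = N n := Nat.floor_natCast _
  have hidx_one : ∀ n, idx n 1 = N n := by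
    intro n
    show ⌊(1:ℝ) * N n⌋₊ = N n
    rw [one_mul, Nat.floor_natCast]
  have hidx_div : ∀ (n : ℕ) (t : ℝ), 0 ≤ t → t < 1 → idx (n+1) t / M n = idx n t := by
    intro n t ht0 ht1
    have hNn1 : (N (n+1) : ℝ) = (N n : ℝ) * M n := by rw [hNM' n]; push_cast; ring
    have hlow : idx n t * M n ≤ idx (n+1) t := by
      rw [Nat.le_floor_iff (mul_nonneg ht0 (Nat.cast_nonneg _))]
      push_cast
      rw [hNn1, ← mul_assoc]
      exact mul_le_mul_of_nonneg_right (Nat.floor_le (mul_nonneg ht0 (Nat.cast_nonneg _)))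
        (Nat.cast_nonneg _)
    have hhigh : idx (n+1) t < (idx n t + 1) * M n := by
      rw [Nat.floor_lt (mul_nonneg ht0 (Nat.cast_nonneg _))]
      push_cast
      rw [hNn1, ← mul_assoc]
      apply mul_lt_mul_of_pos_right (Nat.lt_floor_add_one _)
      exact_mod_cast hM0 n
    exact Nat.div_eq_of_lt_le hlow hhigh
  -- membership of later points in earlier sets
  have hstep1 : ∀ (n : ℕ) (t : ℝ), 0 ≤ t → t < 1 →
      closure (C (n+1) (idx (n+1) t)) ⊆ C n (idx n t) := by
    intro n t ht0 ht1
    have := hlink' n (idx (n+1) t) (hidx_lt (n+1) t ht0 ht1)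
    rwa [hidx_div n t ht0 ht1] at this
  have hCsub : ∀ (t : ℝ), 0 ≤ t → t < 1 → ∀ n m, n < m →
      closure (C m (idx m t)) ⊆ C n (idx n t) := by
    intro t ht0 ht1 n m hnm
    induction m, hnm using Nat.le_induction with
    | base => exact hstep1 n t ht0 ht1
    | succ m hnm ih =>
      exact (hstep1 m t ht0 ht1).trans (subset_closure.trans ih)
  have hmem : ∀ (t : ℝ), 0 ≤ t → t < 1 → ∀ n m, n < m → p m (idx m t) ∈ C n (idx n t) := by
    intro t ht0 ht1 n m hnm
    exact hCsub t ht0 ht1 n m hnm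
      (subset_closure ((hch m _ (hidx_lt m t ht0 ht1)).2.2.2.2.1))
  -- Cauchy and limit
  have hcauchy : ∀ (t : ℝ), 0 ≤ t → t < 1 → CauchySeq (fun n => p n (idx n t)) := by
    intro t ht0 ht1
    apply cauchySeq_of_le_geometric (1/2 : ℝ) 1 (by norm_num)
    intro n
    have h1 : p (n+1) (idx (n+1) t) ∈ C n (idx n t) := hmem t ht0 ht1 n (n+1) (Nat.lt_succ_self n)
    have h2 := (hch n _ (hidx_lt n t ht0 ht1)).2.2.2.1 h1
    rw [dist_comm]
    rw [mem_ball] at h2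
    calc dist (p (n+1) (idx (n+1) t)) (p n (idx n t)) ≤ (1/2:ℝ)^n := h2.le
      _ = 1 * (1/2)^n := (one_mul _).symm
  set γ : ℝ → X := fun t => if t < 1 then limUnder atTop (fun n => p n (idx n t)) else b with hγdef
  have htend : ∀ (t : ℝ), 0 ≤ t → t < 1 → Tendsto (fun n => p n (idx n t)) atTop (𝓝 (γ t)) := by
    intro t ht0 ht1
    have := (hcauchy t ht0 ht1).tendsto_limUnder
    simpa [hγdef, if_pos ht1] using this
  have hγmem : ∀ (t : ℝ), 0 ≤ t → t < 1 → ∀ n, γ t ∈ C n (idx n t) := by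
    intro t ht0 ht1 n
    apply hstep1 n t ht0 ht1
    apply mem_closure_of_tendsto (htend t ht0 ht1)
    filter_upwards [Filter.eventually_gt_atTop (n+1)] with m hm
    exact hmem t ht0 ht1 (n+1) m hm
  have hγU : ∀ (t : ℝ), 0 ≤ t → t < 1 → γ t ∈ U := by
    intro t ht0 ht1
    exact (hch 0 _ (hidx_lt 0 t ht0 ht1)).2.2.1 (subset_closure (hγmem t ht0 ht1 0))
  have hγ0 : γ 0 = a := by
    have : ∀ n, p n (idx n 0) = a := by
      intro n
      have : idx n 0 = 0 := by simp [hidxdef]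
      rw [this, hp0]
    have ht : Tendsto (fun n => p n (idx n 0)) atTop (𝓝 a) := by
      simp only [this]; exact tendsto_const_nhds
    rw [hγdef]
    simp only [if_pos (by norm_num : (0:ℝ) < 1)]
    exact ht.limUnder_eq
  have hγ1 : γ 1 = b := by rw [hγdef]; simp
  -- distance from γ t to the n-th approximation
  have happrox : ∀ (n : ℕ) (t : ℝ), t ∈ Icc (0:ℝ) 1 → dist (γ t) (p n (idx n t)) ≤ (1/2:ℝ)^n := by
    intro n t ⟨ht0, ht1⟩
    rcases lt_or_eq_of_le ht1 with h | h
    · have := (hch n _ (hidx_lt n t ht0 h)).2.2.2.1 (hγmem t ht0 h n)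
      rw [mem_ball] at this
      exact this.le
    · subst h
      rw [hγ1, hidx_one, hpN, dist_self]
      positivity
  -- consecutive chain points are close
  have hconsec : ∀ (n : ℕ) (i : ℕ), i < N n → dist (p n i) (p n (i+1)) ≤ (1/2:ℝ)^n := by
    intro n i hi
    have := (hch n i hi).2.2.2.1 ((hch n i hi).2.2.2.2.2)
    rw [mem_ball, dist_comm] at this
    exact this.le
  -- index comparison for close parameters
  have hidx_close : ∀ (n : ℕ) (s t : ℝ), 0 ≤ s → 0 ≤ t → dist s t < 1 / N n →
      idx n s ≤ idx n t + 1 := by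
    intro n s t hs0 ht0 hst
    have hNpos : (0:ℝ) < N n := by exact_mod_cast hN n
    have : s * N n < t * N n + 1 := by
      have h1 : s - t < 1 / N n := lt_of_le_of_lt (le_abs_self _) (by rwa [Real.dist_eq] at hst)
      have h2 : (s - t) * N n < 1 := by
        have h3 := mul_lt_mul_of_pos_right h1 hNpos
        rwa [div_mul_cancel₀ 1 (ne_of_gt hNpos)] at h3
      nlinarith
    calc idx n s ≤ ⌊t * N n + 1⌋₊ := Nat.floor_mono this.le
      _ = ⌊t * N n⌋₊ + 1 := by
          rw [Nat.floor_add_one (mul_nonneg ht0 (Nat.cast_nonneg _))]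
      _ = idx n t + 1 := rfl
  have hmid : ∀ (n : ℕ) (s t : ℝ), s ∈ Icc (0:ℝ) 1 → t ∈ Icc (0:ℝ) 1 → dist s t < 1 / N n →
      dist (p n (idx n s)) (p n (idx n t)) ≤ (1/2:ℝ)^n := by
    intro n s t hs ht hst
    have h1 := hidx_close n s t hs.1 ht.1 hst
    have h2 := hidx_close n t s ht.1 hs.1 (by rwa [dist_comm])
    have hsN := hidx_le n s hs.2
    have htN := hidx_le n t ht.2
    rcases Nat.lt_trichotomy (idx n s) (idx n t) with h | h | h
    · have : idx n t = idx n s + 1 := by omega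
      rw [this]
      exact hconsec n (idx n s) (by omega)
    · rw [h, dist_self]; positivity
    · have : idx n s = idx n t + 1 := by omega
      rw [this, dist_comm]
      exact hconsec n (idx n t) (by omega)
  -- continuity
  have hcont : ContinuousOn γ (Icc (0:ℝ) 1) := by
    rw [Metric.continuousOn_iff]
    intro t ht ε hε
    obtain ⟨n, hn⟩ : ∃ n : ℕ, (1/2:ℝ)^n < ε / 3 := by
      obtain ⟨n, hn⟩ := exists_pow_lt_of_lt_one (by positivity : (0:ℝ) < ε / 3) (by norm_num : (1/2:ℝ) < 1)
      exact ⟨n, hn⟩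
    refine ⟨1 / N n, div_pos one_pos (by exact_mod_cast hN n), fun s hs hst => ?_⟩
    calc dist (γ s) (γ t) ≤ dist (γ s) (p n (idx n s)) + dist (p n (idx n s)) (p n (idx n t))
          + dist (p n (idx n t)) (γ t) := dist_triangle4 _ _ _ _
      _ ≤ (1/2:ℝ)^n + (1/2:ℝ)^n + (1/2:ℝ)^n := by
          refine add_le_add (add_le_add (happrox n s hs) (hmid n s t hs ht hst)) ?_
          rw [dist_comm]; exact happrox n t ht
      _ < ε / 3 + ε / 3 + ε / 3 := by linarith
      _ = ε := by ring
  -- build the path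
  refine ⟨⟨⟨fun st => γ st.val, ?_⟩, ?_, ?_⟩, ?_⟩
  · exact hcont.restrict
  · exact hγ0
  · exact hγ1
  · rintro ⟨t, ht0, ht1⟩
    rcases lt_or_eq_of_le ht1 with h | h
    · exact hγU t ht0 h
    · show γ t ∈ U
      rw [h, hγ1]; exact hb

variable [ProperSpace X]

lemma frontier_meet {s u : Set X} (hs : IsPreconnected s)
    (h1 : (s ∩ u).Nonempty) (h2 : (s \ u).Nonempty) : (s ∩ frontier u).Nonempty := by
  by_contra h
  rw [Set.not_nonempty_iff_eq_empty] at h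
  have hsub : s ⊆ interior u ∪ (closure u)ᶜ := by
    intro y hy
    have hyf : y ∉ frontier u := fun hf => (Set.eq_empty_iff_forall_notMem.1 h y ⟨hy, hf⟩)
    by_cases hc : y ∈ closure u
    · left; by_contra hi; exact hyf ⟨hc, hi⟩
    · right; exact hc
  have h1' : (s ∩ interior u).Nonempty := by
    obtain ⟨y, hys, hyu⟩ := h1
    rcases hsub hys with h' | h'
    · exact ⟨y, hys, h'⟩
    · exact absurd (subset_closure hyu) h'
  have h2' : (s ∩ (closure u)ᶜ).Nonempty := by
    obtain ⟨y, hys, hyu⟩ := h2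
    rcases hsub hys with h' | h'
    · exact absurd (interior_subset h') hyu
    · exact ⟨y, hys, h'⟩
  obtain ⟨y, _, hyi, hyc⟩ := hs _ _ isOpen_interior (isClosed_closure).isOpen_compl hsub h1' h2'
  exact hyc (subset_closure (interior_subset hyi))

lemma frontier_ccIn_inter [LocallyConnectedSpace X] {F : Set X} (hF : IsOpen F) (y : X) :
    frontier (connectedComponentIn F y) ∩ F = ∅ := by
  by_cases hy : y ∈ F
  · set E := connectedComponentIn F y with hE
    rw [Set.eq_empty_iff_forall_notMem]
    rintro z ⟨hzfr, hzF⟩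
    have hEopen : IsOpen E := hF.connectedComponentIn
    have hznE : z ∉ E := by
      intro hzE
      exact hzfr.2 (by rwa [hEopen.interior_eq])
    obtain ⟨V, ⟨hVopen, hzV, hVconn⟩, hVF⟩ :=
      (LocallyConnectedSpace.open_connected_basis z).mem_iff.1 (hF.mem_nhds hzF)
    obtain ⟨w, hwV, hwE⟩ := mem_closure_iff.1 hzfr.1 V hVopen hzV
    have hunion : IsPreconnected (V ∪ E) :=
      IsPreconnected.union w hwV hwE hVconn.isPreconnected isPreconnected_connectedComponentIn
    have hyVE : y ∈ V ∪ E := Or.inr (mem_connectedComponentIn hy)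
    have hsub : V ∪ E ⊆ F := union_subset hVF (connectedComponentIn_subset F y)
    have := hunion.subset_connectedComponentIn hyVE hsub
    exact hznE (this (Or.inl hzV))
  · rw [connectedComponentIn_eq_empty hy]
    simp

lemma setDist_le {A B : Set X} {a b : X} (ha : a ∈ A) (hb : b ∈ B) :
    setDist A B ≤ dist a b := by
  apply csInf_le
  · exact ⟨0, fun d ⟨a', _, b', _, hd⟩ => hd ▸ dist_nonneg⟩
  · exact ⟨a, ha, b, hb, rfl⟩

lemma le_setDist {A B : Set X} (hA : A.Nonempty) (hB : B.Nonempty) {c : ℝ}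
    (h : ∀ a ∈ A, ∀ b ∈ B, c ≤ dist a b) : c ≤ setDist A B := by
  apply le_csInf
  · obtain ⟨a, ha⟩ := hA; obtain ⟨b, hb⟩ := hB; exact ⟨dist a b, a, ha, b, hb, rfl⟩
  · rintro d ⟨a, ha, b, hb, rfl⟩; exact h a ha b hb


theorem acc_prime_chain {X : Type*} [MetricSpace X] [ProperSpace X] [LocallyConnectedSpace X]
    {Ω : Set X} (hΩ : BoundedDomain Ω) {x : X} (hx : x ∈ frontier Ω)
    (hacc : Accessible Ω x) :
    ∃ E : ℕ → Set X, IsPrimeChain Ω E ∧ (⋂ k, closure (E k)) = {x} := by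
  classical
  obtain ⟨hΩopen, hΩconn, hΩbdd, hΩne⟩ := hΩ
  obtain ⟨γ, hγc, hγ1, hγΩ⟩ := hacc
  have hxΩ : x ∉ Ω := fun h =>
    (Set.eq_empty_iff_forall_notMem.1 hΩopen.inter_frontier_eq x ⟨h, hx⟩)
  obtain ⟨y₀, hy₀⟩ := hΩconn.nonempty
  have hd₀ : 0 < dist y₀ x := dist_pos.2 (fun h => hxΩ (h ▸ hy₀))
  set d₀ := dist y₀ x with hd₀def
  set r : ℕ → ℝ := fun k => d₀ * (1/2)^(k+1) with hrdef
  have hr : ∀ k, 0 < r k := fun k => by positivity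
  have hrd : ∀ k, r k < d₀ := by
    intro k
    have h1 : (1/2:ℝ)^(k+1) < 1 := by
      apply pow_lt_one₀ (by norm_num) (by norm_num)
      omega
    calc r k = d₀ * (1/2)^(k+1) := rfl
      _ < d₀ * 1 := by apply mul_lt_mul_of_pos_left h1 hd₀
      _ = d₀ := mul_one _
  have hranti : ∀ k, r (k+1) < r k := by
    intro k
    apply mul_lt_mul_of_pos_left _ hd₀
    apply pow_lt_pow_right_of_lt_one₀ (by norm_num) (by norm_num)
    omega
  have hrsmall : ∀ c : ℝ, 0 < c → ∃ m, r m < c := by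
    intro c hc
    obtain ⟨m, hm⟩ := exists_pow_lt_of_lt_one (div_pos hc hd₀) (by norm_num : (1/2:ℝ) < 1)
    refine ⟨m, ?_⟩
    have : (1/2:ℝ)^(m+1) ≤ (1/2)^m := by
      apply pow_le_pow_of_le_one (by norm_num) (by norm_num)
      omega
    calc r m ≤ d₀ * (1/2)^m := mul_le_mul_of_nonneg_left this hd₀.le
      _ < d₀ * (c / d₀) := mul_lt_mul_of_pos_left hm hd₀
      _ = c := by field_simp
  -- choose parameters approaching 1
  have hcw1 : ContinuousWithinAt γ (Icc 0 1) 1 := hγc 1 ⟨zero_le_one, le_refl 1⟩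
  have htau : ∀ k : ℕ, ∃ τ, τ ∈ Ico (0:ℝ) 1 ∧ ∀ s, s ∈ Ico τ 1 → dist (γ s) x < r k := by
    intro k
    rw [ContinuousWithinAt, hγ1] at hcw1
    have := Metric.tendsto_nhds.1 hcw1 (r k) (hr k)
    rw [Filter.eventually_iff_exists_mem] at this
    obtain ⟨v, hv, hvr⟩ := this
    rw [mem_nhdsWithin] at hv
    obtain ⟨w, hwopen, h1w, hwsub⟩ := hv
    obtain ⟨δ, hδ, hball⟩ := Metric.isOpen_iff.1 hwopen 1 h1w
    refine ⟨max (1 - δ/2) 0, ⟨le_max_right _ _, ?_⟩, ?_⟩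
    · apply max_lt _ one_pos
      linarith
    · intro s ⟨hs1, hs2⟩
      have hs0 : 0 ≤ s := le_trans (le_max_right _ _) hs1
      have hsw : s ∈ w := by
        apply hball
        rw [mem_ball, Real.dist_eq, abs_of_nonpos (by linarith)]
        have : 1 - δ/2 ≤ s := le_trans (le_max_left _ _) hs1
        linarith
      exact hvr s (hwsub ⟨hsw, hs0, hs2.le⟩)
  choose τ hτmem hτ using htau
  set t : ℕ → ℝ := fun k => Nat.rec (τ 0) (fun k tk => max (τ (k+1)) tk) k with htdef
  have ht0 : t 0 = τ 0 := rfl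
  have htsucc : ∀ k, t (k+1) = max (τ (k+1)) (t k) := fun k => rfl
  have htτ : ∀ k, τ k ≤ t k := by
    intro k
    cases k with
    | zero => exact le_refl _
    | succ k => rw [htsucc]; exact le_max_left _ _
  have htmem : ∀ k, t k ∈ Ico (0:ℝ) 1 := by
    intro k
    induction k with
    | zero => exact hτmem 0
    | succ k ih =>
      rw [htsucc]
      exact ⟨le_trans ih.1 (le_max_right _ _), max_lt (hτmem (k+1)).2 ih.2⟩
  have htmono : ∀ k, t k ≤ t (k+1) := fun k => by rw [htsucc]; exact le_max_right _ _
  -- the tail images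
  have htail : ∀ k, γ '' Ico (t k) 1 ⊆ Ω ∩ ball x (r k) := by
    rintro k y ⟨s, ⟨hs1, hs2⟩, rfl⟩
    have hs0 : 0 ≤ s := le_trans (htmem k).1 hs1
    refine ⟨hγΩ ⟨s, ⟨hs0, hs2⟩, rfl⟩, ?_⟩
    rw [mem_ball]
    exact hτ k s ⟨le_trans (htτ k) hs1, hs2⟩
  set E : ℕ → Set X := fun k => connectedComponentIn (Ω ∩ ball x (r k)) (γ (t k)) with hEdef
  have hγtk : ∀ k, γ (t k) ∈ Ω ∩ ball x (r k) := by
    intro k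
    exact htail k ⟨t k, ⟨le_refl _, (htmem k).2⟩, rfl⟩
  have hEopen : ∀ k, IsOpen (E k) := fun k => (hΩopen.inter isOpen_ball).connectedComponentIn
  have hEconn : ∀ k, IsConnected (E k) := fun k => isConnected_connectedComponentIn_iff.2 (hγtk k)
  have hEsub : ∀ k, E k ⊆ Ω ∩ ball x (r k) := fun k => connectedComponentIn_subset _ _
  have himg : ∀ k, γ '' Ico (t k) 1 ⊆ E k := by
    intro k
    apply IsPreconnected.subset_connectedComponentIn
    · apply IsPreconnected.image isPreconnected_Ico
      apply hγc.mono
      intro s ⟨hs1, hs2⟩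
      exact ⟨le_trans (htmem k).1 hs1, hs2.le⟩
    · exact ⟨t k, ⟨le_refl _, (htmem k).2⟩, rfl⟩
    · exact htail k
  have hxcl : ∀ k, x ∈ closure (E k) := by
    intro k
    have hne : (1:ℝ) ∈ closure (Ico (t k) 1) := by
      rw [closure_Ico (ne_of_lt (htmem k).2)]
      exact ⟨(htmem k).2.le, le_refl _⟩
    have hnb : (𝓝[Ico (t k) 1] (1:ℝ)).NeBot := mem_closure_iff_nhdsWithin_neBot.1 hne
    have htd : Tendsto γ (𝓝[Ico (t k) 1] 1) (𝓝 x) := by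
      rw [← hγ1]
      apply (hγc 1 ⟨zero_le_one, le_refl 1⟩).mono
      intro s ⟨hs1, hs2⟩
      exact ⟨le_trans (htmem k).1 hs1, hs2.le⟩
    apply mem_closure_of_tendsto htd
    filter_upwards [self_mem_nhdsWithin] with s hs
    exact himg k ⟨s, hs, rfl⟩
  have hy₀E : ∀ k, y₀ ∉ E k := by
    intro k hy₀E
    have := mem_ball.1 (hEsub k hy₀E).2
    exact absurd this (not_lt.2 (hrd k).le)
  have hacc' : ∀ k, Acceptable Ω (E k) := by
    intro k
    refine ⟨isBounded_ball.subset ((hEsub k).trans (inter_subset_right)),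
      hEconn k, (hEsub k).trans inter_subset_left, ?_, ⟨x, hxcl k, hx⟩⟩
    intro h
    exact hy₀E k (h ▸ hy₀)
  have hnested : ∀ k, E (k+1) ⊆ E k := by
    intro k
    have h1 : γ (t (k+1)) ∈ E k := himg k ⟨t (k+1), ⟨htmono k, (htmem (k+1)).2⟩, rfl⟩
    have h2 : E (k+1) ⊆ Ω ∩ ball x (r k) :=
      (hEsub (k+1)).trans (inter_subset_inter_right _ (ball_subset_ball (hranti k).le))
    have h3 := (hEconn (k+1)).isPreconnected.subset_connectedComponentIn
      (mem_connectedComponentIn (hγtk (k+1))) h2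
    rwa [← connectedComponentIn_eq h1] at h3
  -- frontier location
  have hfr : ∀ k, ∀ y, y ∈ Ω ∩ frontier (E k) → dist y x = r k := by
    rintro k y ⟨hyΩ, hyfr⟩
    have h1 : y ∉ ball x (r k) := by
      intro hyb
      exact (Set.eq_empty_iff_forall_notMem.1 (frontier_ccIn_inter (hΩopen.inter isOpen_ball) (γ (t k))) y) ⟨hyfr, hyΩ, hyb⟩
    have h2 : y ∈ closedBall x (r k) := by
      have := hyfr.1
      have hsub : closure (E k) ⊆ closedBall x (r k) :=
        (closure_mono ((hEsub k).trans inter_subset_right)).trans closure_ball_subset_closedBall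
      exact hsub (frontier_subset_closure hyfr)
    rw [mem_closedBall] at h2
    rw [mem_ball, not_lt] at h1
    linarith
  have hfrne : ∀ k, (Ω ∩ frontier (E k)).Nonempty := by
    intro k
    by_contra hemp
    rw [Set.not_nonempty_iff_eq_empty] at hemp
    have hclos : Ω ∩ closure (E k) ⊆ E k := by
      intro z hz
      rcases (closure_eq_self_union_frontier (E k) ▸ hz.2) with h | h
      · exact h
      · exact (Set.eq_empty_iff_forall_notMem.1 hemp z ⟨hz.1, h⟩).elim
    have hcover : Ω ⊆ E k ∪ (closure (E k))ᶜ := by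
      intro z hzΩ
      by_cases h : z ∈ closure (E k)
      · exact Or.inl (hclos ⟨hzΩ, h⟩)
      · exact Or.inr h
    have h1 : (Ω ∩ E k).Nonempty := ⟨γ (t k), (hγtk k).1, mem_connectedComponentIn (hγtk k)⟩
    have h2 : ¬ (Ω ∩ (closure (E k))ᶜ).Nonempty := by
      intro h2
      obtain ⟨z, _, hz1, hz2⟩ := hΩconn.isPreconnected (E k) (closure (E k))ᶜ (hEopen k)
        isClosed_closure.isOpen_compl hcover h1 h2
      exact hz2 (subset_closure hz1)
    rw [Set.not_nonempty_iff_eq_empty] at h2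
    have hΩsub : Ω ⊆ E k := by
      intro z hzΩ
      have : z ∈ closure (E k) := by
        by_contra h
        exact (Set.eq_empty_iff_forall_notMem.1 h2 z) ⟨hzΩ, h⟩
      exact hclos ⟨hzΩ, this⟩
    exact hy₀E k (hΩsub hy₀)
  have hgap : ∀ k, 0 < setDist (Ω ∩ frontier (E (k+1))) (Ω ∩ frontier (E k)) := by
    intro k
    have hc : 0 < r k - r (k+1) := by linarith [hranti k]
    apply lt_of_lt_of_le hc
    apply le_setDist (hfrne (k+1)) (hfrne k)
    intro a ha b hb
    have h1 := hfr (k+1) a ha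
    have h2 := hfr k b hb
    have := dist_triangle b x a
    rw [dist_comm x a] at this
    have h4 : dist a b = dist b a := dist_comm a b
    linarith [dist_triangle b a x, abs_nonneg (dist a b)]
  -- impression
  have himp : (⋂ k, closure (E k)) = {x} := by
    apply Set.eq_singleton_iff_unique_mem.2
    constructor
    · exact Set.mem_iInter.2 hxcl
    · intro y hy
      rw [Set.mem_iInter] at hy
      by_contra hne
      have hd : 0 < dist y x := dist_pos.2 hne
      obtain ⟨m, hm⟩ := hrsmall (dist y x) hd
      have : y ∈ closedBall x (r m) := by
        have hsub : closure (E m) ⊆ closedBall x (r m) :=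
          (closure_mono ((hEsub m).trans inter_subset_right)).trans closure_ball_subset_closedBall
        exact hsub (hy m)
      rw [mem_closedBall] at this
      linarith
  have hchain : IsChainIn Ω E := ⟨hacc', hnested, hgap, himp ▸ Set.singleton_subset_iff.2 hx⟩
  -- primality
  refine ⟨E, ⟨hchain, ?_⟩, himp⟩
  intro F hF hdiv
  refine ⟨hdiv, ?_⟩
  intro k
  have hδ : 0 < setDist (Ω ∩ frontier (F (k+1))) (Ω ∩ frontier (F k)) := hF.2.2.1 k
  set δ := setDist (Ω ∩ frontier (F (k+1))) (Ω ∩ frontier (F k)) with hδdef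
  obtain ⟨m, hm⟩ := hrsmall (δ/2) (by linarith)
  refine ⟨m, ?_⟩
  by_contra hnot
  obtain ⟨z, hzE, hzF⟩ := not_subset.1 hnot
  have hFanti : ∀ i j, i ≤ j → F j ⊆ F i := fun i j hij =>
    antitone_nat_of_succ_le hF.2.1 hij
  obtain ⟨l, hl⟩ := hdiv m
  set l' := max l (k+1) with hl'def
  obtain ⟨w, hw⟩ := (hF.1 l').2.1.nonempty
  have hwE : w ∈ E m := hl (hFanti l l' (le_max_left _ _) hw)
  have hwF1 : w ∈ F (k+1) := hFanti (k+1) l' (le_max_right _ _) hw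
  have hzF1 : z ∉ F (k+1) := fun h => hzF (hF.2.1 k h)
  -- two frontier points
  obtain ⟨p, hpE, hpfr⟩ := frontier_meet (hEconn m).isPreconnected
    ⟨w, hwE, hFanti k (k+1) (Nat.le_succ k) hwF1⟩ ⟨z, hzE, hzF⟩
  obtain ⟨q, hqE, hqfr⟩ := frontier_meet (hEconn m).isPreconnected
    ⟨w, hwE, hwF1⟩ ⟨z, hzE, hzF1⟩
  have hpΩ : p ∈ Ω := (hEsub m hpE).1
  have hqΩ : q ∈ Ω := (hEsub m hqE).1
  have hle : δ ≤ dist q p := setDist_le ⟨hqΩ, hqfr⟩ ⟨hpΩ, hpfr⟩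
  have hdq : dist q x < r m := mem_ball.1 (hEsub m hqE).2
  have hdp : dist p x < r m := mem_ball.1 (hEsub m hpE).2
  have : dist q p < δ := by
    calc dist q p ≤ dist q x + dist x p := dist_triangle _ _ _
      _ = dist q x + dist p x := by rw [dist_comm x p]
      _ < r m + r m := add_lt_add hdq hdp
      _ < δ := by linarith
  linarith

theorem chain_acc {X : Type*} [MetricSpace X] [ProperSpace X] [LocallyConnectedSpace X]
    {Ω : Set X} (hΩ : BoundedDomain Ω) {x : X}
    {E : ℕ → Set X} (hE : IsChainIn Ω E) (him : (⋂ k, closure (E k)) = {x}) :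
    Accessible Ω x := by
  classical
  obtain ⟨hΩopen, hΩconn, hΩbdd, hΩne⟩ := hΩ
  have hanti : ∀ i j, i ≤ j → E j ⊆ E i := fun i j hij => antitone_nat_of_succ_le hE.2.1 hij
  -- closures eventually inside small balls
  have hsmall : ∀ ε : ℝ, 0 < ε → ∃ K, closure (E K) ⊆ ball x ε := by
    intro ε hε
    by_contra h
    push_neg at h
    have hS : ∀ K, (closure (E K) ∩ (ball x ε)ᶜ).Nonempty := by
      intro K
      obtain ⟨y, hy1, hy2⟩ := not_subset.1 (h K)
      exact ⟨y, hy1, hy2⟩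
    have hcompact : ∀ K : ℕ, IsCompact (closure (E K) ∩ (ball x ε)ᶜ) := fun K =>
      ((hE.1 K).1.isCompact_closure).inter_right isOpen_ball.isClosed_compl
    have hclosed : ∀ K : ℕ, IsClosed (closure (E K) ∩ (ball x ε)ᶜ) := fun K =>
      isClosed_closure.inter isOpen_ball.isClosed_compl
    have hdir : Directed (· ⊇ ·) (fun K => closure (E K) ∩ (ball x ε)ᶜ) := by
      intro i j
      exact ⟨max i j,
        inter_subset_inter_left _ (closure_mono (hanti _ _ (le_max_left i j))),
        inter_subset_inter_left _ (closure_mono (hanti _ _ (le_max_right i j)))⟩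
    obtain ⟨y, hy⟩ := IsCompact.nonempty_iInter_of_directed_nonempty_isCompact_isClosed
      _ hdir hS hcompact hclosed
    rw [mem_iInter] at hy
    have hyx : y ∈ ⋂ k, closure (E k) := mem_iInter.2 (fun k => (hy k).1)
    rw [him, mem_singleton_iff] at hyx
    subst hyx
    exact (hy 0).2 (mem_ball_self hε)
  -- nested indices
  have hg : ∀ k : ℕ, ∃ K, closure (E K) ⊆ ball x ((1/2)^k) := fun k => hsmall _ (by positivity)
  choose g hgspec using hg
  set K : ℕ → ℕ := fun k => Nat.rec (g 0) (fun k Kk => max (g (k+1)) Kk) k with hKdef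
  have hKsucc : ∀ k, K (k+1) = max (g (k+1)) (K k) := fun k => rfl
  have hKg : ∀ k, g k ≤ K k := by
    intro k
    cases k with
    | zero => exact le_refl _
    | succ k => rw [hKsucc]; exact le_max_left _ _
  have hKmono : ∀ k, K k ≤ K (k+1) := fun k => by rw [hKsucc]; exact le_max_right _ _
  have hKball : ∀ k, closure (E (K k)) ⊆ ball x ((1/2)^k) := fun k =>
    (closure_mono (hanti _ _ (hKg k))).trans (hgspec k)
  -- points and components
  have hEne : ∀ k, ∃ y, y ∈ E (K k) := fun k => (hE.1 (K k)).2.1.nonempty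
  choose p hp using hEne
  have hpmem : ∀ k, p k ∈ Ω ∩ ball x ((1/2)^k) := fun k =>
    ⟨(hE.1 (K k)).2.2.1 (hp k), hKball k (subset_closure (hp k))⟩
  set V : ℕ → Set X := fun k => connectedComponentIn (Ω ∩ ball x ((1/2)^k)) (p k) with hVdef
  have hVopen : ∀ k, IsOpen (V k) := fun k => (hΩopen.inter isOpen_ball).connectedComponentIn
  have hVconn : ∀ k, IsConnected (V k) := fun k => isConnected_connectedComponentIn_iff.2 (hpmem k)
  have hVsub : ∀ k, V k ⊆ Ω ∩ ball x ((1/2)^k) := fun k => connectedComponentIn_subset _ _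
  have hEV : ∀ k, E (K k) ⊆ V k := by
    intro k
    apply (hE.1 (K k)).2.1.isPreconnected.subset_connectedComponentIn (hp k)
    intro y hy
    exact ⟨(hE.1 (K k)).2.2.1 hy, hKball k (subset_closure hy)⟩
  have hpV1 : ∀ k, p (k+1) ∈ V k := fun k =>
    hEV k (hanti _ _ (hKmono k) (hp (k+1)))
  have hjoin : ∀ k, JoinedIn (V k) (p k) (p (k+1)) := fun k =>
    joinedIn_of_isOpen_isPreconnected (hVopen k) (hVconn k).isPreconnected
      (mem_connectedComponentIn (hpmem k)) (hpV1 k)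
  set σ : ∀ k, Path (p k) (p (k+1)) := fun k => (hjoin k).somePath with hσdef
  have hσmem : ∀ k st, σ k st ∈ V k := fun k => (hjoin k).somePath_mem
  -- the time parametrization
  set T : ℕ → ℝ := fun k => 1 - (1/2)^k with hTdef
  have hT0 : T 0 = 0 := by simp [hTdef]
  have hTlt : ∀ k, T k < T (k+1) := by
    intro k
    simp only [hTdef]
    have : (1/2:ℝ)^(k+1) < (1/2)^k := by
      apply pow_lt_pow_right_of_lt_one₀ (by norm_num) (by norm_num)
      omega
    linarith
  have hTstrict : StrictMono T := strictMono_nat_of_lt_succ hTlt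
  have hTmono : Monotone T := hTstrict.monotone
  have hT1 : ∀ k, T k < 1 := by
    intro k
    simp only [hTdef]
    have : (0:ℝ) < (1/2)^k := by positivity
    linarith
  have hT01 : ∀ k, 0 ≤ T k := fun k => hT0 ▸ hTmono (Nat.zero_le k)
  have hTgap : ∀ k, T (k+1) - T k = (1/2)^(k+1) := by
    intro k
    simp only [hTdef]
    rw [pow_succ]
    ring
  have hex : ∀ s : ℝ, s < 1 → ∃ k, s < T (k+1) := by
    intro s hs
    obtain ⟨k, hk⟩ := exists_pow_lt_of_lt_one (by linarith : (0:ℝ) < 1 - s)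
      (by norm_num : (1/2:ℝ) < 1)
    refine ⟨k, ?_⟩
    have : (1/2:ℝ)^(k+1) ≤ (1/2)^k := by
      apply pow_le_pow_of_le_one (by norm_num) (by norm_num); omega
    simp only [hTdef]
    linarith
  set J : ℝ → ℕ := fun s => if h : s < 1 then Nat.find (hex s h) else 0 with hJdef
  have hJspec : ∀ s (h : s < 1), s < T (J s + 1) := by
    intro s h
    simp only [hJdef, dif_pos h]
    exact Nat.find_spec (hex s h)
  have hJlb : ∀ s, 0 ≤ s → s < 1 → T (J s) ≤ s := by
    intro s h0 h1
    simp only [hJdef, dif_pos h1]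
    cases hfind : Nat.find (hex s h1) with
    | zero => rw [hT0]; exact h0
    | succ j =>
      have : j < Nat.find (hex s h1) := by omega
      have := Nat.find_min (hex s h1) this
      push_neg at this
      exact this
  have hJeq : ∀ (k : ℕ) (s : ℝ), T k ≤ s → s < T (k+1) → J s = k := by
    intro k s h0 h1
    have hs1 : s < 1 := lt_trans h1 (hT1 (k+1))
    simp only [hJdef, dif_pos hs1]
    rw [Nat.find_eq_iff]
    refine ⟨h1, ?_⟩
    intro m hm
    push_neg
    exact le_trans (hTmono (by omega : m + 1 ≤ k)) h0
  -- the curve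
  set γ : ℝ → X := fun s => if h : s < 1 then
      (σ (J s)).extend ((s - T (J s)) / (1/2)^(J s + 1)) else x with hγdef
  have hγ1 : γ 1 = x := by simp [hγdef]
  have hγval : ∀ (k : ℕ) (s : ℝ), T k ≤ s → s < T (k+1) →
      γ s = (σ k).extend ((s - T k) / (1/2)^(k+1)) := by
    intro k s h0 h1
    have hs1 : s < 1 := lt_trans h1 (hT1 (k+1))
    have hJ : J s = k := hJeq k s h0 h1
    simp only [hγdef, dif_pos hs1]
    exact congrArg (fun j => (σ j).extend ((s - T j) / (1/2)^(j+1))) hJ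
  have hγmem : ∀ s, 0 ≤ s → s < 1 → γ s ∈ V (J s) := by
    intro s h0 h1
    simp only [hγdef, dif_pos h1]
    have : (σ (J s)).extend ((s - T (J s)) / (1/2)^(J s + 1)) ∈ range ((σ (J s)).extend) :=
      mem_range_self _
    rw [Path.extend_range] at this
    obtain ⟨st, hst⟩ := this
    rw [← hst]
    exact hσmem (J s) st
  have hγΩ : γ '' Ico 0 1 ⊆ Ω := by
    rintro y ⟨s, ⟨h0, h1⟩, rfl⟩
    exact (hVsub (J s) (hγmem s h0 h1)).1
  -- piecewise description
  have hpiece : ∀ k, EqOn γ (fun s => (σ k).extend ((s - T k) / (1/2)^(k+1)))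
      (Icc (T k) (T (k+1))) := by
    intro k s hs
    obtain ⟨h0, h1⟩ := hs
    rcases lt_or_eq_of_le h1 with h | h
    · exact hγval k s h0 h
    · have hlhs : γ s = p (k+1) := by
        have h2 := hγval (k+1) s (le_of_eq h.symm) (h ▸ hTlt (k+1))
        rw [h2, h, sub_self, zero_div, Path.extend_zero]
      rw [hlhs]
      show _ = (σ k).extend ((s - T k) / (1/2)^(k+1))
      rw [h, hTgap k, div_self (by positivity : ((1:ℝ)/2)^(k+1) ≠ 0), Path.extend_one]
  have hcontk : ∀ k, ContinuousOn γ (Icc (T k) (T (k+1))) := by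
    intro k
    apply ContinuousOn.congr _ (hpiece k)
    apply Continuous.continuousOn
    exact (σ k).continuous_extend.comp ((continuous_id.sub continuous_const).div_const _)
  -- gluing lemma
  have hglue : ∀ {a b c : ℝ}, a ≤ b → b ≤ c → ContinuousOn γ (Icc a b) →
      ContinuousOn γ (Icc b c) → ContinuousOn γ (Icc a c) := by
    intro a b c hab hbc h1 h2
    rw [← Set.Icc_union_Icc_eq_Icc hab hbc]
    intro y hy
    apply ContinuousWithinAt.union
    · by_cases h : y ∈ Icc a b
      · exact h1 y h
      · exact continuousWithinAt_of_notMem_closure (by rwa [isClosed_Icc.closure_eq])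
    · by_cases h : y ∈ Icc b c
      · exact h2 y h
      · exact continuousWithinAt_of_notMem_closure (by rwa [isClosed_Icc.closure_eq])
  have hcont0T : ∀ k, ContinuousOn γ (Icc 0 (T (k+1))) := by
    intro k
    induction k with
    | zero => exact hT0 ▸ hcontk 0
    | succ k ih => exact hglue (hT01 (k+1)) (hTlt (k+1)).le ih (hcontk (k+1))
  -- continuity on [0,1]
  have hcont : ContinuousOn γ (Icc 0 1) := by
    intro s hs
    rcases lt_or_eq_of_le hs.2 with hs1 | hs1
    · obtain ⟨k, hk⟩ := hex s hs1
      apply (hcont0T k s ⟨hs.1, hk.le⟩).mono_of_mem_nhdsWithin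
      apply mem_nhdsWithin.2
      exact ⟨Iio (T (k+1)), isOpen_Iio, hk, fun y hy => ⟨hy.2.1, hy.1.le⟩⟩
    · subst hs1
      rw [Metric.continuousWithinAt_iff]
      intro ε hε
      obtain ⟨k, hk⟩ := exists_pow_lt_of_lt_one hε (by norm_num : (1/2:ℝ) < 1)
      refine ⟨(1/2)^k, by positivity, ?_⟩
      intro y hy hyd
      rcases lt_or_eq_of_le hy.2 with hy1 | hy1
      · have hTk : T k < y := by
          simp only [hTdef]
          rw [Real.dist_eq, abs_of_nonpos (by linarith [hy.2])] at hyd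
          linarith
        have hJk : k ≤ J y := by
          have h1 : T k < T (J y + 1) := lt_trans hTk (hJspec y hy1)
          have := hTstrict.lt_iff_lt.1 h1
          omega
        have hmem := (hVsub (J y) (hγmem y hy.1 hy1)).2
        rw [mem_ball] at hmem
        rw [hγ1]
        calc dist (γ y) x < (1/2)^(J y) := hmem
          _ ≤ (1/2)^k := by
              apply pow_le_pow_of_le_one (by norm_num) (by norm_num) hJk
          _ < ε := hk
      · rw [hy1, hγ1, dist_self]
        exact hε
  exact ⟨γ, hcont, hγ1, hγΩ⟩

end PrimeEndAux

/-- For `x ∈ ∂Ω` the following are equivalent: `x` is accessible; there is a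
chain with impression `{x}`; there is a prime chain with impression `{x}`. -/
theorem statement6 {X : Type*} [MetricSpace X] [ProperSpace X] [LocallyConnectedSpace X]
    (Ω : Set X) (hΩ : BoundedDomain Ω)
    (x : X) (hx : x ∈ frontier Ω) :
    (Accessible Ω x ↔
      ∃ E : ℕ → Set X, IsChainIn Ω E ∧ (⋂ k, closure (E k)) = {x}) ∧
    (Accessible Ω x ↔
      ∃ E : ℕ → Set X, IsPrimeChain Ω E ∧ (⋂ k, closure (E k)) = {x}) := by
  have h1 : Accessible Ω x → ∃ E : ℕ → Set X, IsPrimeChain Ω E ∧ (⋂ k, closure (E k)) = {x} :=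
    fun hacc => acc_prime_chain hΩ hx hacc
  have h2 : (∃ E : ℕ → Set X, IsChainIn Ω E ∧ (⋂ k, closure (E k)) = {x}) → Accessible Ω x := by
    rintro ⟨E, hE, him⟩
    exact chain_acc hΩ hE him
  constructor
  · constructor
    · intro hacc
      obtain ⟨E, hE, him⟩ := h1 hacc
      exact ⟨E, hE.1, him⟩
    · exact h2
  · constructor
    · exact h1
    · rintro ⟨E, hE, him⟩
      exact h2 ⟨E, hE.1, him⟩
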